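/- Let p : {0,...,2j} → [0,1] be a probability distribution and set d = 2j+1. Then (d²·∑_{L=0}^{2j} p_L²/(2L+1) − 1)/(d²−1) ≤ 1 − (2/3)·(d²/(d²−1))·(1−p₀)(1+2p₀). -/

import Mathlib

theorem stmt_6 (n : ℕ) (hn : 1 ≤ n) (d : ℝ) (hd : d = n + 1)
    (p : ℕ → ℝ) (hp0 : ∀ L, 0 ≤ p L) (hp1 : ∀ L, p L ≤ 1)
    (hsum : ∑ L ∈ Finset.range (n + 1), p L = 1) :
    (d ^ 2 * ∑ L ∈ Finset.range (n + 1), p L ^ 2 / (2 * L + 1) - 1) / (d ^ 2 - 1)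
      ≤ 1 - (2 / 3) * (d ^ 2 / (d ^ 2 - 1)) * (1 - p 0) * (1 + 2 * p 0) := by
  set q : ℝ := ∑ i ∈ Finset.range n, p (i + 1) with hq
  have hsplit : ∑ L ∈ Finset.range (n + 1), p L = q + p 0 := by
    rw [Finset.sum_range_succ']
  have hq1 : q + p 0 = 1 := by rw [← hsplit]; exact hsum
  have hqnn : 0 ≤ q := Finset.sum_nonneg fun i _ => hp0 _
  have hterm : ∀ i ∈ Finset.range n, p (i + 1) ^ 2 / (2 * (↑(i + 1) : ℝ) + 1)
      ≤ p (i + 1) * q / 3 := by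
    intro i _
    have h1 : (3 : ℝ) ≤ 2 * (↑(i + 1) : ℝ) + 1 := by
      push_cast; nlinarith [Nat.cast_nonneg (α := ℝ) i]
    have h2 : p (i + 1) ≤ q := Finset.single_le_sum (fun j _ => hp0 (j + 1)) (by assumption)
    have h3 : p (i + 1) ^ 2 ≤ p (i + 1) * q := by nlinarith [hp0 (i + 1)]
    calc p (i + 1) ^ 2 / (2 * (↑(i + 1) : ℝ) + 1) ≤ p (i + 1) ^ 2 / 3 := by
          apply div_le_div_of_nonneg_left (by positivity) (by norm_num) h1
      _ ≤ p (i + 1) * q / 3 := by linarith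
  have hS : ∑ L ∈ Finset.range (n + 1), p L ^ 2 / (2 * L + 1)
      ≤ p 0 ^ 2 + q ^ 2 / 3 := by
    rw [Finset.sum_range_succ']
    have h4 : ∑ i ∈ Finset.range n, p (i + 1) ^ 2 / (2 * (↑(i + 1) : ℝ) + 1)
        ≤ ∑ i ∈ Finset.range n, p (i + 1) * q / 3 := Finset.sum_le_sum hterm
    have h5 : ∑ i ∈ Finset.range n, p (i + 1) * q / 3 = q ^ 2 / 3 := by
      rw [← Finset.sum_div, ← Finset.sum_mul]; ring
    have h6 : p 0 ^ 2 / (2 * (0 : ℕ) + 1) = p 0 ^ 2 := by norm_num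
    push_cast at h4 h5 ⊢
    nlinarith [h4]
  have hd2 : (2 : ℝ) ≤ d := by
    rw [hd]; have : (1 : ℝ) ≤ n := by exact_mod_cast hn
    linarith
  have hA : 0 < d ^ 2 - 1 := by nlinarith
  rw [div_le_iff₀ hA]
  have hrhs : (1 - (2 / 3) * (d ^ 2 / (d ^ 2 - 1)) * (1 - p 0) * (1 + 2 * p 0)) * (d ^ 2 - 1)
      = (d ^ 2 - 1) - (2 / 3) * d ^ 2 * (1 - p 0) * (1 + 2 * p 0) := by
    field_simp
  rw [hrhs]
  have hp00 := hp0 0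
  have hqe : q = 1 - p 0 := by linarith
  have key := mul_le_mul_of_nonneg_left hS (by positivity : (0:ℝ) ≤ d ^ 2)
  rw [hqe] at key
  nlinarith [key]
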